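/- Let G be a finite simple graph, let R and S be disjoint subsets of V(G), and let T = R ∪ S. Let τ be a T-type, let B_T ⊆ T, and let C_T ⊆ T be an independent set of G[T] with |C_T ∩ B_T| ≤ 1 that is valid relative to B_T and has T-type τ relative to B_T. Then there exist an R-type ρ and an S-type σ that are compatible such that C_T ∩ R is an independent set of G[R] that is valid relative to B_T ∩ R and has R-type ρ relative to B_T ∩ R, C_T ∩ S is an independent set of G[S] that is valid relative to B_T ∩ S and has S-type σ relative to B_T ∩ S, and moreover τ is the merge type of ρ and σ. -/

import Mathlib

open scoped Classical

namespace BCol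

/-- The three possible descriptions of a color class on an equivalence class:
`none`, `contains`, or `demand`. -/
inductive Desc where
  | none
  | contains
  | demand
deriving DecidableEq

variable {V : Type*}

/-- The neighborhood of `v` outside of `U`, i.e. `N_G(v) \ U`. -/
def extN (G : SimpleGraph V) (U : Set V) (v : V) : Set V := G.neighborSet v \ U

/-- The `~_U`-equivalence class of `u`: the vertices of `U` with the same
neighborhood outside of `U` as `u`. -/
def cls (G : SimpleGraph V) (U : Set V) (u : V) : Set V :=
  {v | v ∈ U ∧ extN G U v = extN G U u}

/-- The set of equivalence classes `U/~_U`. -/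
def eqClasses (G : SimpleGraph V) (U : Set V) : Set (Set V) :=
  {Q | ∃ u ∈ U, Q = cls G U u}

/-- The equivalence classes of `~_U`, as a type. -/
abbrev Classes (G : SimpleGraph V) (U : Set V) := {Q // Q ∈ eqClasses G U}

/-- A `U`-type: a pair of a map `U/~_U → {none, contains, demand}` and a bit. -/
abbrev UType (G : SimpleGraph V) (U : Set V) := (Classes G U → Desc) × Bool

/-- The neighborhood of `v` in the induced subgraph `G[U]`. -/
def indN (G : SimpleGraph V) (U : Set V) (v : V) : Set V := G.neighborSet v ∩ U

/-- `C` is an independent set of the induced subgraph `G[U]`. -/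
def IndepIn (G : SimpleGraph V) (U C : Set V) : Prop :=
  C ⊆ U ∧ ∀ u ∈ C, ∀ v ∈ C, ¬ G.Adj u v

/-- The `desc`-component of the `U`-type of the color class `C` relative to the set `B`
of partial `b`-vertices. -/
noncomputable def descOf (G : SimpleGraph V) (U B C : Set V) (Q : Classes G U) : Desc :=
  if (Q.1 ∩ C).Nonempty then Desc.contains
  else if ∃ v ∈ B ∩ Q.1, indN G U v ∩ C = ∅ then Desc.demand
  else Desc.none

/-- The `U`-type of the color class `C` relative to the set `B` of partial `b`-vertices. -/
noncomputable def typeOf (G : SimpleGraph V) (U B C : Set V) : UType G U :=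
  (descOf G U B C, if (C ∩ B).Nonempty then true else false)

/-- `C` is valid relative to `B`: there is no class `Q ∈ U/~_U` intersecting `C` such
that some `v ∈ B ∩ Q` has closed neighborhood in `G[U]` disjoint from `C`. -/
def ValidClass (G : SimpleGraph V) (U B C : Set V) : Prop :=
  ¬ ∃ Q ∈ eqClasses G U, (Q ∩ C).Nonempty ∧
      ∃ v ∈ B ∩ Q, (insert v (indN G U v)) ∩ C = ∅

/-- `Q_R Q_S ∈ E(H)`: every vertex of `Q_R` is adjacent to every vertex of `Q_S`. -/
def OpEdge (G : SimpleGraph V) (QR QS : Set V) : Prop :=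
  ∀ u ∈ QR, ∀ v ∈ QS, G.Adj u v

/-- An `R`-type `ρ` and an `S`-type `σ` are compatible. -/
def CompatibleTypes (G : SimpleGraph V) (R S : Set V)
    (ρ : UType G R) (σ : UType G S) : Prop :=
  (¬ (ρ.2 = true ∧ σ.2 = true)) ∧
  (¬ ∃ (QR : Classes G R) (QS : Classes G S),
      OpEdge G QR.1 QS.1 ∧ ρ.1 QR = Desc.contains ∧ σ.1 QS = Desc.contains) ∧
  (∀ Q : Classes G (R ∪ S),
    ((∃ QR : Classes G R, QR.1 ⊆ Q.1 ∧ ρ.1 QR = Desc.contains) ∨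
     (∃ QS : Classes G S, QS.1 ⊆ Q.1 ∧ σ.1 QS = Desc.contains)) →
    ((∀ QR : Classes G R, QR.1 ⊆ Q.1 → ρ.1 QR = Desc.demand →
        ∃ QS : Classes G S, σ.1 QS = Desc.contains ∧ OpEdge G QR.1 QS.1) ∧
     (∀ QS : Classes G S, QS.1 ⊆ Q.1 → σ.1 QS = Desc.demand →
        ∃ QR : Classes G R, ρ.1 QR = Desc.contains ∧ OpEdge G QR.1 QS.1)))

/-- The merge type of an `R`-type `ρ` and an `S`-type `σ`. -/
noncomputable def mergeType (G : SimpleGraph V) (R S : Set V)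
    (ρ : UType G R) (σ : UType G S) : UType G (R ∪ S) :=
  (fun Q =>
    if (∃ QR : Classes G R, QR.1 ⊆ Q.1 ∧ ρ.1 QR = Desc.contains) ∨
       (∃ QS : Classes G S, QS.1 ⊆ Q.1 ∧ σ.1 QS = Desc.contains) then
      Desc.contains
    else if (∃ QR : Classes G R, QR.1 ⊆ Q.1 ∧ ρ.1 QR = Desc.demand ∧
              ∀ QS : Classes G S, OpEdge G QR.1 QS.1 → σ.1 QS ≠ Desc.contains) ∨
            (∃ QS : Classes G S, QS.1 ⊆ Q.1 ∧ σ.1 QS = Desc.demand ∧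
              ∀ QR : Classes G R, OpEdge G QR.1 QS.1 → ρ.1 QR ≠ Desc.contains) then
      Desc.demand
    else Desc.none,
   ρ.2 || σ.2)

/-- `((C_1, …, C_k), B)` is a partial `b`-coloring of `G[U]` with `k` colors:
the `C_i` partition `U` into independent sets of `G[U]`, `B ⊆ U`, and each color class
contains at most one vertex of `B`. -/
def IsPartialBColoring (G : SimpleGraph V) (U : Set V) {k : ℕ}
    (C : Fin k → Set V) (B : Set V) : Prop :=
  (⋃ i, C i) = U ∧ (Pairwise fun i j => Disjoint (C i) (C j)) ∧
  (∀ i, IndepIn G U (C i)) ∧ B ⊆ U ∧ ∀ i, (C i ∩ B).Subsingleton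

/-- A valid partial `b`-coloring of `G[U]`: every color class is valid relative to `B`. -/
def IsValidPartialBColoring (G : SimpleGraph V) (U : Set V) {k : ℕ}
    (C : Fin k → Set V) (B : Set V) : Prop :=
  IsPartialBColoring G U C B ∧ ∀ i, ValidClass G U B (C i)

/-- The `U`-signature of the partial `b`-coloring `(C, B)`: to each `U`-type `τ` it
assigns the number of color classes whose `U`-type relative to `B` is `τ`. -/
noncomputable def sigOf (G : SimpleGraph V) (U : Set V) {k : ℕ}
    (C : Fin k → Set V) (B : Set V) : UType G U → ℕ :=
  fun τ => Nat.card {i : Fin k // typeOf G U B (C i) = τ}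

/-- `σ` is a `U`-signature for `k` colors: the values of `σ` sum up to `k`. -/
def IsSignature (G : SimpleGraph V) (U : Set V) (k : ℕ) (σ : UType G U → ℕ) : Prop :=
  ∑ᶠ τ, σ τ = k

/-- A triple `(σT, σR, σS)` of signatures is compatible: there is an assignment `f` of
natural numbers to the edges of the merge skeleton (i.e. to the compatible pairs of an
`R`-type and an `S`-type) such that the sums of `f` over the edges incident to each
`R`-type `ρ`, to each `S`-type `σ`, and over the edges labeled by each merge type `τ`
are `σR ρ`, `σS σ`, and `σT τ`, respectively. -/
def CompatibleSignatures (G : SimpleGraph V) (R S : Set V)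
    (σT : UType G (R ∪ S) → ℕ) (σR : UType G R → ℕ) (σS : UType G S → ℕ) : Prop :=
  ∃ f : UType G R × UType G S → ℕ,
    (∀ p, ¬ CompatibleTypes G R S p.1 p.2 → f p = 0) ∧
    (∀ ρ, ∑ᶠ σ, f (ρ, σ) = σR ρ) ∧
    (∀ σ, ∑ᶠ ρ, f (ρ, σ) = σS σ) ∧
    (∀ τ, ∑ᶠ p ∈ {p : UType G R × UType G S | mergeType G R S p.1 p.2 = τ}, f p = σT τ)

lemma extN_mono {G : SimpleGraph V} {U W : Set V} (h : U ⊆ W) (v : V) :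
    extN G W v = extN G U v \ W := by
  ext x
  simp only [extN, Set.mem_diff, SimpleGraph.mem_neighborSet]
  exact ⟨fun ⟨a, b⟩ => ⟨⟨a, fun hx => b (h hx)⟩, b⟩, fun ⟨⟨a, _⟩, b⟩ => ⟨a, b⟩⟩

lemma cls_subset {G : SimpleGraph V} {U W : Set V} (h : U ⊆ W) (v : V) :
    cls G U v ⊆ cls G W v := by
  rintro y ⟨hyU, hye⟩
  exact ⟨h hyU, by rw [extN_mono h, extN_mono h, hye]⟩

lemma mem_cls_self {G : SimpleGraph V} {U : Set V} {u : V} (hu : u ∈ U) :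
    u ∈ cls G U u := ⟨hu, rfl⟩

lemma cls_eq_of_mem {G : SimpleGraph V} {U : Set V} {u x : V} (hx : x ∈ cls G U u) :
    cls G U x = cls G U u := by
  ext y
  simp only [cls, Set.mem_setOf_eq, hx.2]

lemma cls_mem_eqClasses {G : SimpleGraph V} {U : Set V} {u : V} (hu : u ∈ U) :
    cls G U u ∈ eqClasses G U := ⟨u, hu, rfl⟩

lemma adj_of_extN {G : SimpleGraph V} {U : Set V} {u v w : V}
    (huv : u ∈ cls G U v) (h1 : G.Adj v w) (h2 : w ∉ U) : G.Adj u w := by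
  have : w ∈ extN G U u := by rw [huv.2]; exact ⟨h1, h2⟩
  exact this.1

lemma opEdge_of_adj {G : SimpleGraph V} {R S : Set V} (hRS : Disjoint R S)
    {v w : V} (hv : v ∈ R) (hw : w ∈ S) (hadj : G.Adj v w) :
    OpEdge G (cls G R v) (cls G S w) := by
  intro u hu z hz
  have hwR : w ∉ R := fun h => Set.disjoint_left.mp hRS h hw
  have huw : G.Adj u w := adj_of_extN hu hadj hwR
  have huS : u ∉ S := fun h => Set.disjoint_left.mp hRS hu.1 h
  exact (adj_of_extN hz huw.symm huS).symm

lemma descOf_eq_contains_iff {G : SimpleGraph V} {U B C : Set V} (Q : Classes G U) :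
    descOf G U B C Q = Desc.contains ↔ (Q.1 ∩ C).Nonempty := by
  unfold descOf
  split_ifs <;> simp_all

lemma descOf_eq_demand_iff {G : SimpleGraph V} {U B C : Set V} (Q : Classes G U) :
    descOf G U B C Q = Desc.demand ↔
      ¬(Q.1 ∩ C).Nonempty ∧ ∃ v ∈ B ∩ Q.1, indN G U v ∩ C = ∅ := by
  unfold descOf
  split_ifs <;> simp_all

lemma valid_inter {G : SimpleGraph V} {A W B C : Set V} (hAW : A ⊆ W)
    (hInd : ∀ u ∈ C, ∀ v ∈ C, ¬ G.Adj u v)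
    (hval : ValidClass G W B C) : ValidClass G A (B ∩ A) (C ∩ A) := by
  rintro ⟨Q, ⟨u, huA, rfl⟩, ⟨x, hxQ, hxC, hxA⟩, v, ⟨⟨hvB, hvA⟩, hvQ⟩, hve⟩
  have hxv : x ∈ cls G A v := by
    rw [cls_eq_of_mem hvQ]; exact hxQ
  refine hval ⟨cls G W v, cls_mem_eqClasses (hAW hvA), ⟨x, cls_subset hAW v hxv, hxC⟩,
    v, ⟨hvB, mem_cls_self (hAW hvA)⟩, ?_⟩
  rw [Set.eq_empty_iff_forall_notMem]
  rintro w ⟨(rfl | hw), hwC⟩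
  · have : w ∈ insert w (indN G A w) ∩ (C ∩ A) := ⟨Set.mem_insert _ _, hwC, hvA⟩
    rw [hve] at this; exact this
  · by_cases hwA : w ∈ A
    · have : w ∈ insert v (indN G A v) ∩ (C ∩ A) :=
        ⟨Set.mem_insert_of_mem v ⟨hw.1, hwA⟩, hwC, hwA⟩
      rw [hve] at this; exact this
    · exact hInd x hxC w hwC (adj_of_extN hxv hw.1 hwA)

/-- Splitting types (Lemma: split). Let `R, S` be disjoint vertex subsets of a finite
graph `G` and `T = R ∪ S`. For every `T`-type `τ`, every `B_T ⊆ T` and every valid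
independent color class `C_T ⊆ T` of `G[T]` of `T`-type `τ` relative to `B_T`, there
are a compatible pair of an `R`-type `ρ` and an `S`-type `σ` such that `C_T ∩ R` is a
valid independent color class of `G[R]` of `R`-type `ρ` relative to `B_T ∩ R`,
`C_T ∩ S` is a valid independent color class of `G[S]` of `S`-type `σ` relative to
`B_T ∩ S`, and `τ` is the merge type of `ρ` and `σ`. -/
theorem split_types {V : Type*} [Fintype V] [DecidableEq V] (G : SimpleGraph V)
    (R S : Set V) (hRS : Disjoint R S)
    (τ : UType G (R ∪ S)) (BT CT : Set V) (hBT : BT ⊆ R ∪ S)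
    (hCTind : IndepIn G (R ∪ S) CT) (hCTB : (CT ∩ BT).Subsingleton)
    (hCTvalid : ValidClass G (R ∪ S) BT CT)
    (hCTtype : typeOf G (R ∪ S) BT CT = τ) :
    ∃ (ρ : UType G R) (σ : UType G S),
      CompatibleTypes G R S ρ σ ∧
      IndepIn G R (CT ∩ R) ∧ ((CT ∩ R) ∩ (BT ∩ R)).Subsingleton ∧
      ValidClass G R (BT ∩ R) (CT ∩ R) ∧ typeOf G R (BT ∩ R) (CT ∩ R) = ρ ∧
      IndepIn G S (CT ∩ S) ∧ ((CT ∩ S) ∩ (BT ∩ S)).Subsingleton ∧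
      ValidClass G S (BT ∩ S) (CT ∩ S) ∧ typeOf G S (BT ∩ S) (CT ∩ S) = σ ∧
      τ = mergeType G R S ρ σ := by
  have hC : CT ⊆ R ∪ S := hCTind.1
  have hI := hCTind.2
  have hUR : R ⊆ R ∪ S := Set.subset_union_left
  have hUS : S ⊆ R ∪ S := Set.subset_union_right
  have hcls : ∀ {A : Set V}, A ⊆ R ∪ S → ∀ (Q : Classes G (R ∪ S)) {x : V},
      x ∈ Q.1 → x ∈ A → cls G A x ⊆ Q.1 := by
    rintro A hA ⟨Q, u, hu, rfl⟩ x hxQ hxA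
    exact (cls_subset hA x).trans (cls_eq_of_mem hxQ).subset
  have hrep : ∀ {A : Set V} (Q : Classes G A) {v : V}, v ∈ Q.1 → Q.1 = cls G A v := by
    rintro A ⟨Q, u, hu, rfl⟩ v hv
    exact (cls_eq_of_mem hv).symm
  refine ⟨typeOf G R (BT ∩ R) (CT ∩ R), typeOf G S (BT ∩ S) (CT ∩ S), ?_,
    ⟨Set.inter_subset_right, fun u hu v hv => hI u hu.1 v hv.1⟩,
    fun x hx y hy => hCTB ⟨hx.1.1, hx.2.1⟩ ⟨hy.1.1, hy.2.1⟩,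
    valid_inter hUR hI hCTvalid, rfl,
    ⟨Set.inter_subset_right, fun u hu v hv => hI u hu.1 v hv.1⟩,
    fun x hx y hy => hCTB ⟨hx.1.1, hx.2.1⟩ ⟨hy.1.1, hy.2.1⟩,
    valid_inter hUS hI hCTvalid, rfl, ?_⟩
  · -- compatibility
    refine ⟨?_, ?_, ?_⟩
    · -- bits
      rintro ⟨h1, h2⟩
      simp only [typeOf] at h1 h2
      have hR : ((CT ∩ R) ∩ (BT ∩ R)).Nonempty := by
        by_contra h; simp [h] at h1
      have hS : ((CT ∩ S) ∩ (BT ∩ S)).Nonempty := by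
        by_contra h; simp [h] at h2
      obtain ⟨x, ⟨hxC, hxR⟩, hxB, -⟩ := hR
      obtain ⟨y, ⟨hyC, hyS⟩, hyB, -⟩ := hS
      have : x = y := hCTB ⟨hxC, hxB⟩ ⟨hyC, hyB⟩
      exact Set.disjoint_left.mp hRS hxR (this ▸ hyS)
    · -- no double contains
      rintro ⟨QR, QS, hop, hcR, hcS⟩
      simp only [typeOf] at hcR hcS
      rw [descOf_eq_contains_iff] at hcR hcS
      obtain ⟨x, hx1, hxC, hxR⟩ := hcR
      obtain ⟨y, hy1, hyC, hyS⟩ := hcS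
      exact hI x hxC y hyC (hop x hx1 y hy1)
    · -- demands met
      intro Q hQ
      simp only [typeOf] at hQ ⊢
      have hQC : (Q.1 ∩ CT).Nonempty := by
        rcases hQ with ⟨QR, hsub, hc⟩ | ⟨QS, hsub, hc⟩ <;>
          rw [descOf_eq_contains_iff] at hc <;>
          obtain ⟨x, hx1, hx2, -⟩ := hc <;> exact ⟨x, hsub hx1, hx2⟩
      constructor
      · intro QR hsub hdem
        rw [descOf_eq_demand_iff] at hdem
        obtain ⟨hne, v, ⟨⟨hvB, hvR⟩, hvQR⟩, hvind⟩ := hdem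
        have hne2 : ¬ ((insert v (indN G (R ∪ S) v)) ∩ CT = ∅) :=
          fun h => hCTvalid ⟨Q.1, Q.2, hQC, v, ⟨hvB, hsub hvQR⟩, h⟩
        obtain ⟨w, hw1, hwC⟩ := Set.nonempty_iff_ne_empty.mpr hne2
        rcases Set.mem_insert_iff.mp hw1 with rfl | ⟨hadj, hwU⟩
        · exact absurd ⟨hvQR, hwC, hvR⟩ (fun h => hne ⟨w, h⟩)
        · have hwS : w ∈ S := by
            rcases hwU with h | h
            · have : w ∈ indN G R v ∩ (CT ∩ R) := ⟨⟨hadj, h⟩, hwC, h⟩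
              rw [hvind] at this; exact this.elim
            · exact h
          refine ⟨⟨cls G S w, cls_mem_eqClasses hwS⟩,
            (descOf_eq_contains_iff _).mpr ⟨w, mem_cls_self hwS, hwC, hwS⟩, ?_⟩
          rw [hrep QR hvQR]
          exact opEdge_of_adj hRS hvR hwS hadj
      · intro QS hsub hdem
        rw [descOf_eq_demand_iff] at hdem
        obtain ⟨hne, v, ⟨⟨hvB, hvS⟩, hvQS⟩, hvind⟩ := hdem
        have hne2 : ¬ ((insert v (indN G (R ∪ S) v)) ∩ CT = ∅) :=
          fun h => hCTvalid ⟨Q.1, Q.2, hQC, v, ⟨hvB, hsub hvQS⟩, h⟩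
        obtain ⟨w, hw1, hwC⟩ := Set.nonempty_iff_ne_empty.mpr hne2
        rcases Set.mem_insert_iff.mp hw1 with rfl | ⟨hadj, hwU⟩
        · exact absurd ⟨hvQS, hwC, hvS⟩ (fun h => hne ⟨w, h⟩)
        · have hwR : w ∈ R := by
            rcases hwU with h | h
            · exact h
            · have : w ∈ indN G S v ∩ (CT ∩ S) := ⟨⟨hadj, h⟩, hwC, h⟩
              rw [hvind] at this; exact this.elim
          refine ⟨⟨cls G R w, cls_mem_eqClasses hwR⟩,
            (descOf_eq_contains_iff _).mpr ⟨w, mem_cls_self hwR, hwC, hwR⟩, ?_⟩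
          rw [hrep QS hvQS]
          exact opEdge_of_adj hRS hwR hvS hadj.symm
  · -- merge type
    subst hCTtype
    refine Prod.ext ?_ ?_
    · funext Q
      simp only [typeOf, mergeType]
      have Hcont :
          ((∃ QR : Classes G R, QR.1 ⊆ Q.1 ∧
              descOf G R (BT ∩ R) (CT ∩ R) QR = Desc.contains) ∨
           (∃ QS : Classes G S, QS.1 ⊆ Q.1 ∧
              descOf G S (BT ∩ S) (CT ∩ S) QS = Desc.contains)) ↔
          (Q.1 ∩ CT).Nonempty := by
        constructor
        · rintro (⟨QR, hsub, hc⟩ | ⟨QS, hsub, hc⟩) <;>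
            rw [descOf_eq_contains_iff] at hc <;>
            obtain ⟨x, hx1, hx2, -⟩ := hc <;> exact ⟨x, hsub hx1, hx2⟩
        · rintro ⟨x, hxQ, hxC⟩
          rcases hC hxC with hxR | hxS
          · exact Or.inl ⟨⟨cls G R x, cls_mem_eqClasses hxR⟩, hcls hUR Q hxQ hxR,
              (descOf_eq_contains_iff _).mpr ⟨x, mem_cls_self hxR, hxC, hxR⟩⟩
          · exact Or.inr ⟨⟨cls G S x, cls_mem_eqClasses hxS⟩, hcls hUS Q hxQ hxS,
              (descOf_eq_contains_iff _).mpr ⟨x, mem_cls_self hxS, hxC, hxS⟩⟩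
      by_cases h1 : (Q.1 ∩ CT).Nonempty
      · rw [descOf, if_pos h1]; exact (if_pos (Hcont.mpr h1)).symm
      · have Hdem :
            ((∃ QR : Classes G R, QR.1 ⊆ Q.1 ∧
                descOf G R (BT ∩ R) (CT ∩ R) QR = Desc.demand ∧
                ∀ QS : Classes G S, OpEdge G QR.1 QS.1 →
                  descOf G S (BT ∩ S) (CT ∩ S) QS ≠ Desc.contains) ∨
             (∃ QS : Classes G S, QS.1 ⊆ Q.1 ∧
                descOf G S (BT ∩ S) (CT ∩ S) QS = Desc.demand ∧
                ∀ QR : Classes G R, OpEdge G QR.1 QS.1 →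
                  descOf G R (BT ∩ R) (CT ∩ R) QR ≠ Desc.contains)) ↔
            (∃ v ∈ BT ∩ Q.1, indN G (R ∪ S) v ∩ CT = ∅) := by
          constructor
          · rintro (⟨QR, hsub, hdem, hall⟩ | ⟨QS, hsub, hdem, hall⟩)
            · rw [descOf_eq_demand_iff] at hdem
              obtain ⟨hne, v, ⟨⟨hvB, hvR⟩, hvQR⟩, hvind⟩ := hdem
              refine ⟨v, ⟨hvB, hsub hvQR⟩, ?_⟩
              rw [Set.eq_empty_iff_forall_notMem]
              rintro w ⟨⟨hadj, hwU⟩, hwC⟩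
              rcases hwU with hwR | hwS
              · have : w ∈ indN G R v ∩ (CT ∩ R) := ⟨⟨hadj, hwR⟩, hwC, hwR⟩
                rw [hvind] at this; exact this
              · refine hall ⟨cls G S w, cls_mem_eqClasses hwS⟩ ?_
                  ((descOf_eq_contains_iff _).mpr ⟨w, mem_cls_self hwS, hwC, hwS⟩)
                rw [hrep QR hvQR]
                exact opEdge_of_adj hRS hvR hwS hadj
            · rw [descOf_eq_demand_iff] at hdem
              obtain ⟨hne, v, ⟨⟨hvB, hvS⟩, hvQS⟩, hvind⟩ := hdem
              refine ⟨v, ⟨hvB, hsub hvQS⟩, ?_⟩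
              rw [Set.eq_empty_iff_forall_notMem]
              rintro w ⟨⟨hadj, hwU⟩, hwC⟩
              rcases hwU with hwR | hwS
              · refine hall ⟨cls G R w, cls_mem_eqClasses hwR⟩ ?_
                  ((descOf_eq_contains_iff _).mpr ⟨w, mem_cls_self hwR, hwC, hwR⟩)
                rw [hrep QS hvQS]
                exact opEdge_of_adj hRS hwR hvS hadj.symm
              · have : w ∈ indN G S v ∩ (CT ∩ S) := ⟨⟨hadj, hwS⟩, hwC, hwS⟩
                rw [hvind] at this; exact this
          · rintro ⟨v, ⟨hvB, hvQ⟩, hvind⟩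
            rcases hBT hvB with hvR | hvS
            · refine Or.inl ⟨⟨cls G R v, cls_mem_eqClasses hvR⟩, hcls hUR Q hvQ hvR,
                ?_, ?_⟩
              · rw [descOf_eq_demand_iff]
                refine ⟨?_, v, ⟨⟨hvB, hvR⟩, mem_cls_self hvR⟩, ?_⟩
                · rintro ⟨x, hx1, hx2, -⟩
                  exact h1 ⟨x, hcls hUR Q hvQ hvR hx1, hx2⟩
                · rw [Set.eq_empty_iff_forall_notMem]
                  rintro w ⟨⟨hadj, hwR⟩, hwC, -⟩
                  have : w ∈ indN G (R ∪ S) v ∩ CT := ⟨⟨hadj, Or.inl hwR⟩, hwC⟩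
                  rw [hvind] at this; exact this
              · intro QS hop hc
                rw [descOf_eq_contains_iff] at hc
                obtain ⟨w, hw1, hwC, hwS⟩ := hc
                have : w ∈ indN G (R ∪ S) v ∩ CT :=
                  ⟨⟨hop v (mem_cls_self hvR) w hw1, Or.inr hwS⟩, hwC⟩
                rw [hvind] at this; exact this
            · refine Or.inr ⟨⟨cls G S v, cls_mem_eqClasses hvS⟩, hcls hUS Q hvQ hvS,
                ?_, ?_⟩
              · rw [descOf_eq_demand_iff]
                refine ⟨?_, v, ⟨⟨hvB, hvS⟩, mem_cls_self hvS⟩, ?_⟩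
                · rintro ⟨x, hx1, hx2, -⟩
                  exact h1 ⟨x, hcls hUS Q hvQ hvS hx1, hx2⟩
                · rw [Set.eq_empty_iff_forall_notMem]
                  rintro w ⟨⟨hadj, hwS⟩, hwC, -⟩
                  have : w ∈ indN G (R ∪ S) v ∩ CT := ⟨⟨hadj, Or.inr hwS⟩, hwC⟩
                  rw [hvind] at this; exact this
              · intro QR hop hc
                rw [descOf_eq_contains_iff] at hc
                obtain ⟨w, hw1, hwC, hwR⟩ := hc
                have : w ∈ indN G (R ∪ S) v ∩ CT :=
                  ⟨⟨(hop w hw1 v (mem_cls_self hvS)).symm, Or.inl hwR⟩, hwC⟩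
                rw [hvind] at this; exact this
        rw [descOf, if_neg h1]; refine Eq.trans ?_ (if_neg (fun h => h1 (Hcont.mp h))).symm
        by_cases h2 : ∃ v ∈ BT ∩ Q.1, indN G (R ∪ S) v ∩ CT = ∅
        · rw [if_pos h2]; exact (if_pos (Hdem.mpr h2)).symm
        · rw [if_neg h2]; exact (if_neg (fun h => h2 (Hdem.mp h))).symm
    · simp only [typeOf, mergeType]
      have hbit : (CT ∩ BT).Nonempty ↔
          ((CT ∩ R) ∩ (BT ∩ R)).Nonempty ∨ ((CT ∩ S) ∩ (BT ∩ S)).Nonempty := by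
        constructor
        · rintro ⟨x, hxC, hxB⟩
          rcases hC hxC with h | h
          · exact Or.inl ⟨x, ⟨hxC, h⟩, hxB, h⟩
          · exact Or.inr ⟨x, ⟨hxC, h⟩, hxB, h⟩
        · rintro (⟨x, ⟨h1, -⟩, h3, -⟩ | ⟨x, ⟨h1, -⟩, h3, -⟩) <;> exact ⟨x, h1, h3⟩
      by_cases hA : ((CT ∩ R) ∩ (BT ∩ R)).Nonempty <;>
        by_cases hB : ((CT ∩ S) ∩ (BT ∩ S)).Nonempty <;>
        simp [hA, hB, hbit]

end BCol
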